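/- arXiv:1407.5161 — 6 statements merged into one kernel-verified Lean document; each statement's English description precedes it below -/
import Mathlib

section
/- Let D = [[D1, D2ᴴ],[D2, D3]] be a Hermitian positive definite block matrix. Then Tr(D^{-1}) ≥ Tr(D1^{-1}) + Tr(D3^{-1}), with equality if D2 = 0. -/
open Matrix ComplexOrder

lemma my_trace_fromBlocks {m n : Type*} [Fintype m] [Fintype n]
    (A : Matrix m m ℂ) (B : Matrix m n ℂ) (C : Matrix n m ℂ) (D : Matrix n n ℂ) :
    (Matrix.fromBlocks A B C D).trace = A.trace + D.trace := by
  simp [Matrix.trace, Matrix.diag, Fintype.sum_sum_type]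

lemma my_trace_re_nonneg {m : Type*} [Fintype m] [DecidableEq m] {X : Matrix m m ℂ}
    (hX : X.PosSemidef) : 0 ≤ X.trace.re := by
  have h : ∀ i, 0 ≤ (X i i).re := by
    intro i
    have := hX.dotProduct_mulVec_nonneg (Pi.single i 1)
    simp [dotProduct, mulVec, Pi.single_apply] at this
    exact (Complex.le_def.mp this).1
  simpa [Matrix.trace, Matrix.diag, Complex.re_sum] using Finset.sum_nonneg fun i _ => h i

lemma my_posdef_blocks {n1 n2 : ℕ}
    {D1 : Matrix (Fin n1) (Fin n1) ℂ} {D2 : Matrix (Fin n2) (Fin n1) ℂ}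
    {D3 : Matrix (Fin n2) (Fin n2) ℂ}
    (hD : (Matrix.fromBlocks D1 D2ᴴ D2 D3).PosDef) : D1.PosDef ∧ D3.PosDef := by
  obtain ⟨hherm, hpos⟩ := Matrix.posDef_iff_dotProduct_mulVec.mp hD
  rw [Matrix.isHermitian_fromBlocks_iff] at hherm
  constructor
  · refine Matrix.posDef_iff_dotProduct_mulVec.mpr ⟨hherm.1, fun x hx => ?_⟩
    have hne : (Sum.elim x 0 : Fin n1 ⊕ Fin n2 → ℂ) ≠ 0 := by
      intro h
      exact hx (funext fun i => congrFun h (Sum.inl i))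
    have := hpos hne
    simpa [Function.star_sumElim, Matrix.fromBlocks_mulVec, sumElim_dotProduct_sumElim]
      using this
  · refine Matrix.posDef_iff_dotProduct_mulVec.mpr ⟨hherm.2.2.2, fun x hx => ?_⟩
    have hne : (Sum.elim 0 x : Fin n1 ⊕ Fin n2 → ℂ) ≠ 0 := by
      intro h
      exact hx (funext fun i => congrFun h (Sum.inr i))
    have := hpos hne
    simpa [Function.star_sumElim, Matrix.fromBlocks_mulVec, sumElim_dotProduct_sumElim]
      using this

/-- For a Hermitian PD block matrix D = [[D1, D2ᴴ],[D2, D3]],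
    Tr(D⁻¹) ≥ Tr(D1⁻¹) + Tr(D3⁻¹), with equality if D2 = 0. -/
theorem trace_inv_block_ge_trace_inv_diag {n1 n2 : ℕ}
    (D1 : Matrix (Fin n1) (Fin n1) ℂ) (D2 : Matrix (Fin n2) (Fin n1) ℂ)
    (D3 : Matrix (Fin n2) (Fin n2) ℂ)
    (hD : (Matrix.fromBlocks D1 D2ᴴ D2 D3).PosDef) :
    (D1⁻¹).trace.re + (D3⁻¹).trace.re ≤ ((Matrix.fromBlocks D1 D2ᴴ D2 D3)⁻¹).trace.re ∧
    (D2 = 0 →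
      ((Matrix.fromBlocks D1 D2ᴴ D2 D3)⁻¹).trace = (D1⁻¹).trace + (D3⁻¹).trace) := by
  obtain ⟨hD1, hD3⟩ := my_posdef_blocks hD
  haveI iD1 := hD1.isUnit.invertible
  haveI iD3 := hD3.isUnit.invertible
  haveI iM := hD.isUnit.invertible
  haveI iS1 := Matrix.invertibleOfFromBlocks₂₂Invertible D1 D2ᴴ D2 D3
  haveI iS3 := Matrix.invertibleOfFromBlocks₁₁Invertible D1 D2ᴴ D2 D3
  have h11 := Matrix.invOf_fromBlocks₁₁_eq D1 D2ᴴ D2 D3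
  have h22 := Matrix.invOf_fromBlocks₂₂_eq D1 D2ᴴ D2 D3
  have hQ : (⅟(D3 - D2 * ⅟D1 * D2ᴴ) : Matrix (Fin n2) (Fin n2) ℂ)
      = ⅟D3 + ⅟D3 * D2 * ⅟(D1 - D2ᴴ * ⅟D3 * D2) * D2ᴴ * ⅟D3 := by
    have h := congrArg Matrix.toBlocks₂₂ (h11.symm.trans h22)
    simpa [Matrix.toBlocks_fromBlocks₂₂] using h
  have hpsd : (Matrix.fromBlocks D1 D2ᴴ D2ᴴᴴ D3).PosSemidef := by
    rw [conjTranspose_conjTranspose]; exact hD.posSemidef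
  have hS3psd : (D3 - D2 * ⅟D1 * D2ᴴ).PosSemidef := by
    have h := (Matrix.PosDef.fromBlocks₁₁ D2ᴴ D3 hD1).mp hpsd
    rw [conjTranspose_conjTranspose] at h
    rwa [Matrix.invOf_eq_nonsing_inv]
  have hS1psd : (D1 - D2ᴴ * ⅟D3 * D2).PosSemidef := by
    have h := (Matrix.PosDef.fromBlocks₂₂ D1 D2ᴴ hD3).mp hpsd
    rw [conjTranspose_conjTranspose] at h
    rwa [Matrix.invOf_eq_nonsing_inv]
  have hS3ipsd : (⅟(D3 - D2 * ⅟D1 * D2ᴴ) : Matrix (Fin n2) (Fin n2) ℂ).PosSemidef := by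
    rw [Matrix.invOf_eq_nonsing_inv]; exact hS3psd.inv
  have hS1ipsd : (⅟(D1 - D2ᴴ * ⅟D3 * D2) : Matrix (Fin n1) (Fin n1) ℂ).PosSemidef := by
    rw [Matrix.invOf_eq_nonsing_inv]; exact hS1psd.inv
  have hinvD1H : (⅟D1 : Matrix (Fin n1) (Fin n1) ℂ)ᴴ = ⅟D1 := by
    simp [Matrix.invOf_eq_nonsing_inv, Matrix.conjTranspose_nonsing_inv, hD1.1.eq]
  have hinvD3H : (⅟D3 : Matrix (Fin n2) (Fin n2) ℂ)ᴴ = ⅟D3 := by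
    simp [Matrix.invOf_eq_nonsing_inv, Matrix.conjTranspose_nonsing_inv, hD3.1.eq]
  have hX1 : (⅟D1 * D2ᴴ * ⅟(D3 - D2 * ⅟D1 * D2ᴴ) * D2 * ⅟D1).PosSemidef := by
    have h := hS3ipsd.conjTranspose_mul_mul_same (D2 * ⅟D1)
    rw [conjTranspose_mul, hinvD1H] at h
    simpa [Matrix.mul_assoc] using h
  have hX3 : (⅟D3 * D2 * ⅟(D1 - D2ᴴ * ⅟D3 * D2) * D2ᴴ * ⅟D3).PosSemidef := by
    have h := hS1ipsd.conjTranspose_mul_mul_same (D2ᴴ * ⅟D3)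
    rw [conjTranspose_mul, hinvD3H, conjTranspose_conjTranspose] at h
    simpa [Matrix.mul_assoc] using h
  have hinv : (Matrix.fromBlocks D1 D2ᴴ D2 D3)⁻¹ = ⅟(Matrix.fromBlocks D1 D2ᴴ D2 D3) :=
    (Matrix.invOf_eq_nonsing_inv _).symm
  have htr : (⅟(Matrix.fromBlocks D1 D2ᴴ D2 D3)).trace
      = (⅟D1).trace + (⅟D1 * D2ᴴ * ⅟(D3 - D2 * ⅟D1 * D2ᴴ) * D2 * ⅟D1).trace
        + ((⅟D3).trace + (⅟D3 * D2 * ⅟(D1 - D2ᴴ * ⅟D3 * D2) * D2ᴴ * ⅟D3).trace) := by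
    rw [h11, my_trace_fromBlocks, hQ, Matrix.trace_add, Matrix.trace_add]
  constructor
  · rw [hinv, htr]
    have h1 := my_trace_re_nonneg hX1
    have h3 := my_trace_re_nonneg hX3
    simp only [Complex.add_re, Matrix.invOf_eq_nonsing_inv]
    simp only [Matrix.invOf_eq_nonsing_inv] at h1 h3
    linarith
  · intro h2
    rw [hinv, htr]
    subst h2
    simp [Matrix.invOf_eq_nonsing_inv]
end

section
/- For Hermitian positive semidefinite N×N matrices A and B, Tr(AB) ≤ Σ_{i=1}^N σ_{A,i} σ_{B,i}, where σ_{A,i} and σ_{B,i} are the eigenvalues of A and B each arranged in decreasing order. -/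
open Matrix ComplexOrder

open Finset

private lemma abel_identity (a x : ℕ → ℝ) (n : ℕ) :
    ∑ i ∈ range n, a i * x i =
      (∑ k ∈ range n, (a k - a (k+1)) * (∑ i ∈ range (k+1), x i))
        + a n * ∑ i ∈ range n, x i := by
  induction n with
  | zero => simp
  | succ n ih =>
    rw [sum_range_succ (f := fun i => a i * x i),
      sum_range_succ (f := fun k => (a k - a (k+1)) * (∑ i ∈ range (k+1), x i)),
      sum_range_succ (f := x), ih]
    ring

private lemma abel_compare (n : ℕ) (a x y : ℕ → ℝ) (ha : ∀ k, a (k+1) ≤ a k)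
    (hX : ∀ K, K ≤ n → ∑ i ∈ range K, x i ≤ ∑ i ∈ range K, y i)
    (hlast : ∑ i ∈ range n, x i = ∑ i ∈ range n, y i) :
    ∑ i ∈ range n, a i * x i ≤ ∑ i ∈ range n, a i * y i := by
  rw [abel_identity a x n, abel_identity a y n, hlast]
  refine add_le_add ?_ le_rfl
  refine sum_le_sum fun k hk => ?_
  have hk' : k + 1 ≤ n := mem_range.mp hk
  exact mul_le_mul_of_nonneg_left (hX _ hk') (by linarith [ha k])

private lemma col_bound (n K : ℕ) (hK : K ≤ n) (b : ℕ → ℝ) (hb : ∀ k, b (k+1) ≤ b k)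
    (c : ℕ → ℝ) (hc0 : ∀ j ∈ range n, 0 ≤ c j) (hc1 : ∀ j ∈ range n, c j ≤ 1)
    (hsum : ∑ j ∈ range n, c j = K) :
    ∑ j ∈ range n, b j * c j ≤ ∑ j ∈ range K, b j := by
  have hbmono : Antitone b := antitone_nat_of_succ_le hb
  rcases K with _ | m
  · -- K = 0 : all c j = 0
    have : ∀ j ∈ range n, c j = 0 := by
      intro j hj
      have := (sum_eq_zero_iff_of_nonneg hc0).mp (by simpa using hsum) j hj
      exact this
    simp only [range_zero, sum_empty]
    calc ∑ j ∈ range n, b j * c j = 0 := by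
          refine sum_eq_zero fun j hj => by rw [this j hj, mul_zero]
    _ ≤ 0 := le_rfl
  · have hsplit : range n = range (m+1) ∪ Ico (m+1) n := by
      rw [range_eq_Ico, range_eq_Ico]
      exact (Finset.Ico_union_Ico_eq_Ico (Nat.zero_le _) hK).symm
    have hdisj : Disjoint (range (m+1)) (Ico (m+1) n) := by
      rw [range_eq_Ico]; exact Finset.Ico_disjoint_Ico_consecutive 0 (m+1) n
    have key : ∀ j ∈ range n, b j * c j ≤
        (if j < m+1 then b j + b m * (c j - 1) else b m * c j) := by
      intro j hj
      by_cases h : j < m+1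
      · simp only [h, if_true]
        have h1 : b m ≤ b j := hbmono (Nat.lt_succ_iff.mp h)
        have h2 : c j - 1 ≤ 0 := by linarith [hc1 j hj]
        nlinarith
      · simp only [h, if_false]
        have h1 : b j ≤ b m := hbmono (by omega)
        have h2 : 0 ≤ c j := hc0 j hj
        nlinarith
    calc ∑ j ∈ range n, b j * c j
        ≤ ∑ j ∈ range n, (if j < m+1 then b j + b m * (c j - 1) else b m * c j) :=
          sum_le_sum key
      _ = ∑ j ∈ range (m+1), (b j + b m * (c j - 1)) + ∑ j ∈ Ico (m+1) n, b m * c j := by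
          rw [hsplit, sum_union hdisj]
          congr 1
          · exact sum_congr rfl fun j hj => by simp [mem_range.mp hj]
          · exact sum_congr rfl fun j hj => by simp [not_lt.mpr (mem_Ico.mp hj).1]
      _ = ∑ j ∈ range (m+1), b j + b m * (∑ j ∈ range n, c j - (m+1)) := by
          rw [sum_add_distrib, ← mul_sum, ← mul_sum]
          have h1 : ∑ j ∈ range n, c j = ∑ j ∈ range (m+1), c j + ∑ j ∈ Ico (m+1) n, c j := by
            rw [hsplit, sum_union hdisj]
          have h2 : ∑ j ∈ range (m+1), (c j - 1) = ∑ j ∈ range (m+1), c j - (m+1) := by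
            rw [sum_sub_distrib]; simp
          rw [h2, h1]; ring
      _ = ∑ j ∈ range (m+1), b j := by rw [hsum]; push_cast; ring_nf

private lemma ds_nat (n : ℕ) (a b : ℕ → ℝ) (d : ℕ → ℕ → ℝ)
    (ha : ∀ k, a (k+1) ≤ a k) (hb : ∀ k, b (k+1) ≤ b k)
    (hd0 : ∀ i j, 0 ≤ d i j)
    (hrow : ∀ i ∈ range n, ∑ j ∈ range n, d i j = 1)
    (hcol : ∀ j ∈ range n, ∑ i ∈ range n, d i j = 1) :
    ∑ i ∈ range n, ∑ j ∈ range n, a i * b j * d i j ≤ ∑ i ∈ range n, a i * b i := by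
  have hrw : ∀ i, ∑ j ∈ range n, a i * b j * d i j = a i * ∑ j ∈ range n, b j * d i j := by
    intro i; rw [mul_sum]; exact sum_congr rfl fun j _ => by ring
  simp only [hrw]
  apply abel_compare n a _ b ha
  · intro K hK
    have hswap : ∑ i ∈ range K, ∑ j ∈ range n, b j * d i j
        = ∑ j ∈ range n, b j * (∑ i ∈ range K, d i j) := by
      rw [sum_comm]
      exact sum_congr rfl fun j _ => by rw [mul_sum]
    rw [hswap]
    apply col_bound n K hK b hb
    · intro j _; exact sum_nonneg fun i _ => hd0 i j
    · intro j hj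
      calc ∑ i ∈ range K, d i j ≤ ∑ i ∈ range n, d i j :=
            sum_le_sum_of_subset_of_nonneg (range_subset_range.mpr hK) fun i _ _ => hd0 i j
        _ = 1 := hcol j hj
    · rw [sum_comm]
      calc ∑ i ∈ range K, ∑ j ∈ range n, d i j
          = ∑ i ∈ range K, 1 := sum_congr rfl fun i hi =>
            hrow i (mem_range.mpr (lt_of_lt_of_le (mem_range.mp hi) hK))
        _ = K := by simp
  · rw [sum_comm]
    calc ∑ j ∈ range n, ∑ i ∈ range n, b j * d i j
        = ∑ j ∈ range n, b j := by
          refine sum_congr rfl fun j hj => ?_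
          rw [← mul_sum, hcol j hj, mul_one]
      _ = _ := rfl

private lemma ds_fin {N : ℕ} (a b : Fin N → ℝ) (ha : Antitone a) (hb : Antitone b)
    (d : Fin N → Fin N → ℝ) (hd0 : ∀ i j, 0 ≤ d i j)
    (hrow : ∀ i, ∑ j, d i j = 1) (hcol : ∀ j, ∑ i, d i j = 1) :
    ∑ i, ∑ j, a i * b j * d i j ≤ ∑ i, a i * b i := by
  rcases N with _ | n
  · simp
  set a' : ℕ → ℝ := fun k => a ⟨min k n, by omega⟩ with ha'def
  set b' : ℕ → ℝ := fun k => b ⟨min k n, by omega⟩ with hb'def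
  set d' : ℕ → ℕ → ℝ :=
    fun i j => if h : i < n+1 ∧ j < n+1 then d ⟨i, h.1⟩ ⟨j, h.2⟩ else 0 with hd'def
  have haF : ∀ i : Fin (n+1), a' (i : ℕ) = a i := by
    intro i
    simp only [ha'def]
    congr 1
    exact Fin.ext (by simp [Nat.lt_succ_iff.mp i.isLt])
  have hbF : ∀ i : Fin (n+1), b' (i : ℕ) = b i := by
    intro i
    simp only [hb'def]
    congr 1
    exact Fin.ext (by simp [Nat.lt_succ_iff.mp i.isLt])
  have hdF : ∀ i j : Fin (n+1), d' (i : ℕ) (j : ℕ) = d i j := by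
    intro i j
    simp only [hd'def, dif_pos (And.intro i.isLt j.isLt), Fin.eta]
  have ha' : ∀ k, a' (k+1) ≤ a' k := by
    intro k
    exact ha (by simp [Fin.mk_le_mk, min_le_min_right n (Nat.le_succ k)])
  have hb' : ∀ k, b' (k+1) ≤ b' k := by
    intro k
    exact hb (by simp [Fin.mk_le_mk, min_le_min_right n (Nat.le_succ k)])
  have hd0' : ∀ i j, 0 ≤ d' i j := by
    intro i j
    simp only [hd'def]
    split
    · exact hd0 _ _
    · exact le_rfl
  have hrow' : ∀ i ∈ range (n+1), ∑ j ∈ range (n+1), d' i j = 1 := by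
    intro i hi
    have hi' : i < n + 1 := mem_range.mp hi
    calc ∑ j ∈ range (n+1), d' i j = ∑ j : Fin (n+1), d' i (j : ℕ) :=
          (Fin.sum_univ_eq_sum_range (fun j => d' i j) (n+1)).symm
      _ = ∑ j : Fin (n+1), d ⟨i, hi'⟩ j := by
          refine Finset.sum_congr rfl fun j _ => ?_
          simpa using hdF ⟨i, hi'⟩ j
      _ = 1 := hrow _
  have hcol' : ∀ j ∈ range (n+1), ∑ i ∈ range (n+1), d' i j = 1 := by
    intro j hj
    have hj' : j < n + 1 := mem_range.mp hj
    calc ∑ i ∈ range (n+1), d' i j = ∑ i : Fin (n+1), d' (i : ℕ) j :=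
          (Fin.sum_univ_eq_sum_range (fun i => d' i j) (n+1)).symm
      _ = ∑ i : Fin (n+1), d i ⟨j, hj'⟩ := by
          refine Finset.sum_congr rfl fun i _ => ?_
          simpa using hdF i ⟨j, hj'⟩
      _ = 1 := hcol _
  have key := ds_nat (n+1) a' b' d' ha' hb' hd0' hrow' hcol'
  calc ∑ i, ∑ j, a i * b j * d i j
      = ∑ i ∈ range (n+1), ∑ j ∈ range (n+1), a' i * b' j * d' i j := by
        rw [← Fin.sum_univ_eq_sum_range (fun i => ∑ j ∈ range (n+1), a' i * b' j * d' i j)]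
        refine Finset.sum_congr rfl fun i _ => ?_
        rw [← Fin.sum_univ_eq_sum_range (fun j => a' i * b' j * d' i j)]
        exact Finset.sum_congr rfl fun j _ => by rw [haF, hbF, hdF]
    _ ≤ ∑ i ∈ range (n+1), a' i * b' i := key
    _ = ∑ i, a i * b i := by
        rw [← Fin.sum_univ_eq_sum_range (fun i => a' i * b' i)]
        exact Finset.sum_congr rfl fun i _ => by rw [haF, hbF]

/-- Von Neumann / Ruhe trace inequality: for PSD A, B,
    Tr(AB) ≤ Σ_i σ_{A,i} σ_{B,i} with both eigenvalue lists in decreasing order. -/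
theorem trace_mul_le_sum_ordered_eigenvalues {N : ℕ}
    (A B : Matrix (Fin N) (Fin N) ℂ) (hA : A.PosSemidef) (hB : B.PosSemidef)
    (a b : Fin N → ℝ) (ha : Antitone a) (hb : Antitone b)
    (hea : ∃ e : Equiv.Perm (Fin N), a = hA.1.eigenvalues ∘ e)
    (heb : ∃ e : Equiv.Perm (Fin N), b = hB.1.eigenvalues ∘ e) :
    (A * B).trace.re ≤ ∑ i, a i * b i := by
  obtain ⟨e, hae⟩ := hea
  obtain ⟨f, hbf⟩ := heb
  set α : Fin N → ℝ := hA.1.eigenvalues with hα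
  set β : Fin N → ℝ := hB.1.eigenvalues with hβ
  set U : Matrix (Fin N) (Fin N) ℂ := (hA.1.eigenvectorUnitary : Matrix (Fin N) (Fin N) ℂ)
    with hUdef
  set V : Matrix (Fin N) (Fin N) ℂ := (hB.1.eigenvectorUnitary : Matrix (Fin N) (Fin N) ℂ)
    with hVdef
  have hUU : star U * U = 1 := mem_unitaryGroup_iff'.mp (hA.1.eigenvectorUnitary).2
  have hUU' : U * star U = 1 := mem_unitaryGroup_iff.mp (hA.1.eigenvectorUnitary).2
  have hVV : star V * V = 1 := mem_unitaryGroup_iff'.mp (hB.1.eigenvectorUnitary).2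
  have hVV' : V * star V = 1 := mem_unitaryGroup_iff.mp (hB.1.eigenvectorUnitary).2
  set W : Matrix (Fin N) (Fin N) ℂ := star U * V with hWdef
  have hWW : W * star W = 1 := by
    rw [hWdef, Matrix.star_mul, star_star]
    calc star U * V * (star V * U) = star U * (V * star V) * U := by
          simp only [mul_assoc]
      _ = 1 := by rw [hVV', mul_one, hUU]
  have hWW' : star W * W = 1 := by
    rw [hWdef, Matrix.star_mul, star_star]
    calc star V * U * (star U * V) = star V * (U * star U) * V := by
          simp only [mul_assoc]
      _ = 1 := by rw [hUU', mul_one, hVV]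
  set d : Fin N → Fin N → ℝ := fun i j => Complex.normSq (W i j) with hddef
  have hd0 : ∀ i j, 0 ≤ d i j := fun i j => Complex.normSq_nonneg _
  have hrowC : ∀ i, ∑ j, ((d i j : ℝ) : ℂ) = 1 := by
    intro i
    have h1 : (W * star W) i i = 1 := by rw [hWW]; simp
    rw [mul_apply] at h1
    calc ∑ j, ((d i j : ℝ) : ℂ) = ∑ j, W i j * star W j i := by
          refine Finset.sum_congr rfl fun j _ => ?_
          rw [hddef, star_apply, Complex.star_def, Complex.mul_conj]
      _ = 1 := h1
  have hcolC : ∀ j, ∑ i, ((d i j : ℝ) : ℂ) = 1 := by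
    intro j
    have h1 : (star W * W) j j = 1 := by rw [hWW']; simp
    rw [mul_apply] at h1
    calc ∑ i, ((d i j : ℝ) : ℂ) = ∑ i, star W j i * W i j := by
          refine Finset.sum_congr rfl fun i _ => ?_
          rw [hddef, star_apply, mul_comm, Complex.star_def, Complex.mul_conj]
      _ = 1 := h1
  have hrow : ∀ i, ∑ j, d i j = 1 := by
    intro i
    have := hrowC i
    rw [← Complex.ofReal_sum] at this
    exact_mod_cast this
  have hcol : ∀ j, ∑ i, d i j = 1 := by
    intro j
    have := hcolC j
    rw [← Complex.ofReal_sum] at this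
    exact_mod_cast this
  -- trace computation
  have htr : (A * B).trace = ((∑ i, ∑ j, α i * β j * d i j : ℝ) : ℂ) := by
    have hAe : A = U * diagonal (RCLike.ofReal ∘ α) * star U := hA.1.spectral_theorem
    have hBe : B = V * diagonal (RCLike.ofReal ∘ β) * star V := hB.1.spectral_theorem
    have hmul : A * B =
        U * (diagonal (RCLike.ofReal ∘ α) * W * diagonal (RCLike.ofReal ∘ β) * star V) := by
      rw [hAe, hBe, hWdef]
      simp only [mul_assoc]
    rw [hmul, trace_mul_comm]
    have h2 : diagonal (RCLike.ofReal ∘ α) * W * diagonal (RCLike.ofReal ∘ β) * star V * U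
        = diagonal (RCLike.ofReal ∘ α) * W * diagonal (RCLike.ofReal ∘ β) * star W := by
      rw [hWdef, Matrix.star_mul, star_star, mul_assoc]
    rw [h2, trace]
    push_cast
    refine Finset.sum_congr rfl fun i _ => ?_
    rw [diag_apply, mul_apply]
    refine Finset.sum_congr rfl fun j _ => ?_
    rw [mul_diagonal, diagonal_mul]
    simp only [Function.comp_apply, star_apply, Complex.star_def, hddef, Complex.ofReal_mul,
      ← Complex.mul_conj]
    rw [show (RCLike.ofReal (α i) : ℂ) = Complex.ofReal (α i) from rfl,
      show (RCLike.ofReal (β j) : ℂ) = Complex.ofReal (β j) from rfl]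
    ring
  have hre : (A * B).trace.re = ∑ i, ∑ j, α i * β j * d i j := by
    rw [htr, Complex.ofReal_re]
  rw [hre]
  -- reindex by the permutations
  have hreindex : ∑ i, ∑ j, α i * β j * d i j = ∑ i, ∑ j, a i * b j * d (e i) (f j) := by
    rw [← Equiv.sum_comp e (fun i => ∑ j, α i * β j * d i j)]
    refine Finset.sum_congr rfl fun i _ => ?_
    rw [← Equiv.sum_comp f (fun j => α (e i) * β j * d (e i) j)]
    refine Finset.sum_congr rfl fun j _ => ?_
    rw [hae, hbf]
    rfl
  rw [hreindex]
  refine ds_fin a b ha hb (fun i j => d (e i) (f j)) (fun i j => hd0 _ _) ?_ ?_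
  · intro i
    rw [Equiv.sum_comp f (fun j => d (e i) j)]
    exact hrow _
  · intro j
    rw [Equiv.sum_comp e (fun i => d i (f j))]
    exact hcol _
end

section
/- For Hermitian positive semidefinite N×N matrices A and B, Tr(AB) ≥ Σ_{i=1}^N σ_{A,i}^↓ σ_{B,i}^↑, where σ_{A,i}^↓ are the eigenvalues of A in decreasing order and σ_{B,i}^↑ the eigenvalues of B in increasing order. -/
open Matrix ComplexOrder

/-- Lower trace inequality: for PSD A, B,
    Tr(AB) ≥ Σ_i σ_{A,i}^↓ σ_{B,i}^↑ (A decreasing, B increasing order). -/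
theorem trace_mul_ge_sum_opposed_eigenvalues {N : ℕ}
    (A B : Matrix (Fin N) (Fin N) ℂ) (hA : A.PosSemidef) (hB : B.PosSemidef)
    (a b : Fin N → ℝ) (ha : Antitone a) (hb : Monotone b)
    (hea : ∃ e : Equiv.Perm (Fin N), a = hA.1.eigenvalues ∘ e)
    (heb : ∃ e : Equiv.Perm (Fin N), b = hB.1.eigenvalues ∘ e) :
    (∑ i, a i * b i) ≤ (A * B).trace.re := by
  obtain ⟨e, hae⟩ := hea
  obtain ⟨f, hbf⟩ := heb
  set α : Fin N → ℝ := hA.1.eigenvalues with hα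
  set β : Fin N → ℝ := hB.1.eigenvalues with hβ
  set U : Matrix (Fin N) (Fin N) ℂ := (hA.1.eigenvectorUnitary : Matrix (Fin N) (Fin N) ℂ) with hU
  set V : Matrix (Fin N) (Fin N) ℂ := (hB.1.eigenvectorUnitary : Matrix (Fin N) (Fin N) ℂ) with hV
  have hUU : U * Uᴴ = 1 := by
    simpa [star_eq_conjTranspose] using
      (Matrix.mem_unitaryGroup_iff).mp hA.1.eigenvectorUnitary.2
  have hUU' : Uᴴ * U = 1 := by
    simpa [star_eq_conjTranspose] using
      (Matrix.mem_unitaryGroup_iff').mp hA.1.eigenvectorUnitary.2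
  have hVV : V * Vᴴ = 1 := by
    simpa [star_eq_conjTranspose] using
      (Matrix.mem_unitaryGroup_iff).mp hB.1.eigenvectorUnitary.2
  have hVV' : Vᴴ * V = 1 := by
    simpa [star_eq_conjTranspose] using
      (Matrix.mem_unitaryGroup_iff').mp hB.1.eigenvectorUnitary.2
  set M : Matrix (Fin N) (Fin N) ℂ := Uᴴ * V with hM
  have hMM : M * Mᴴ = 1 := by
    rw [hM, conjTranspose_mul, conjTranspose_conjTranspose]
    calc Uᴴ * V * (Vᴴ * U) = Uᴴ * (V * Vᴴ) * U := by
          simp [mul_assoc]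
      _ = 1 := by rw [hVV, mul_one, hUU']
  have hMM' : Mᴴ * M = 1 := by
    rw [hM, conjTranspose_mul, conjTranspose_conjTranspose]
    calc Vᴴ * U * (Uᴴ * V) = Vᴴ * (U * Uᴴ) * V := by
          simp [mul_assoc]
      _ = 1 := by rw [hUU, mul_one, hVV']
  -- Trace formula
  have htr : (A * B).trace =
      ∑ i, ∑ j, ((α i : ℂ) * (β j : ℂ)) * (M i j * (starRingEnd ℂ) (M i j)) := by
    have hAe : A = U * diagonal (RCLike.ofReal ∘ α) * Uᴴ := by
      simpa [star_eq_conjTranspose] using hA.1.spectral_theorem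
    have hBe : B = V * diagonal (RCLike.ofReal ∘ β) * Vᴴ := by
      simpa [star_eq_conjTranspose] using hB.1.spectral_theorem
    rw [hAe, hBe]
    have h1 : (U * diagonal (RCLike.ofReal ∘ α) * Uᴴ *
        (V * diagonal (RCLike.ofReal ∘ β) * Vᴴ)).trace =
        ((diagonal (RCLike.ofReal ∘ α) * M) * (diagonal (RCLike.ofReal ∘ β) * Mᴴ)).trace := by
      rw [hM, conjTranspose_mul, conjTranspose_conjTranspose]
      rw [show U * diagonal (RCLike.ofReal ∘ α) * Uᴴ *
            (V * diagonal (RCLike.ofReal ∘ β) * Vᴴ) =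
          U * (diagonal (RCLike.ofReal ∘ α) * Uᴴ *
            (V * diagonal (RCLike.ofReal ∘ β) * Vᴴ)) from by simp only [mul_assoc]]
      rw [Matrix.trace_mul_comm]
      congr 1
      simp only [mul_assoc]
    rw [h1]
    simp only [Matrix.trace, Matrix.diag, Matrix.mul_apply, Matrix.diagonal_apply,
      Matrix.conjTranspose_apply, Function.comp, ite_mul, zero_mul,
      Finset.sum_ite_eq, Finset.mem_univ, if_true, RCLike.star_def]
    refine Finset.sum_congr rfl fun i _ => Finset.sum_congr rfl fun j _ => ?_
    simp only [show ((RCLike.ofReal : ℝ → ℂ)) = (Complex.ofReal) from rfl]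
    ring
  -- Real part
  have hre : (A * B).trace.re = ∑ i, ∑ j, α i * β j * Complex.normSq (M i j) := by
    rw [htr, Complex.re_sum]
    refine Finset.sum_congr rfl fun i _ => ?_
    rw [Complex.re_sum]
    refine Finset.sum_congr rfl fun j _ => ?_
    rw [Complex.mul_conj]
    simp
  -- doubly stochastic matrix
  set c : Fin N → Fin N → ℝ := fun i j => Complex.normSq (M (e i) (f j)) with hc
  have hre2 : (A * B).trace.re = ∑ i, ∑ j, a i * b j * c i j := by
    rw [hre]
    rw [← Equiv.sum_comp e (fun i => ∑ j, α i * β j * Complex.normSq (M i j))]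
    refine Finset.sum_congr rfl fun i _ => ?_
    rw [← Equiv.sum_comp f (fun j => α (e i) * β j * Complex.normSq (M (e i) j))]
    refine Finset.sum_congr rfl fun j _ => ?_
    simp [hae, hbf, hc]
  have hds : Matrix.of c ∈ doublyStochastic ℝ (Fin N) := by
    rw [mem_doublyStochastic_iff_sum]
    refine ⟨fun i j => Complex.normSq_nonneg _, fun i => ?_, fun j => ?_⟩
    · have h1 : ((∑ j, Complex.normSq (M (e i) j) : ℝ) : ℂ) = (M * Mᴴ) (e i) (e i) := by
        push_cast
        simp [Matrix.mul_apply, Complex.mul_conj]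
      rw [hMM] at h1
      have h2 : ((∑ j, Complex.normSq (M (e i) j) : ℝ) : ℂ) = 1 := by
        rw [h1]; simp [Matrix.one_apply]
      have h3 : (∑ j, Complex.normSq (M (e i) j) : ℝ) = 1 := by
        exact_mod_cast h2
      calc ∑ j, (Matrix.of c) i j = ∑ j, Complex.normSq (M (e i) (f j)) := rfl
        _ = ∑ j, Complex.normSq (M (e i) j) :=
            Equiv.sum_comp f (fun j => Complex.normSq (M (e i) j))
        _ = 1 := h3
    · have h1 : ((∑ i, Complex.normSq (M i (f j)) : ℝ) : ℂ) = (Mᴴ * M) (f j) (f j) := by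
        push_cast
        simp only [Matrix.mul_apply, Matrix.conjTranspose_apply]
        exact Finset.sum_congr rfl fun x _ => by
          rw [mul_comm]; exact (Complex.mul_conj _).symm
      rw [hMM'] at h1
      have h2 : ((∑ i, Complex.normSq (M i (f j)) : ℝ) : ℂ) = 1 := by
        rw [h1]; simp [Matrix.one_apply]
      have h3 : (∑ i, Complex.normSq (M i (f j)) : ℝ) = 1 := by
        exact_mod_cast h2
      calc ∑ i, (Matrix.of c) i j = ∑ i, Complex.normSq (M (e i) (f j)) := rfl
        _ = ∑ i, Complex.normSq (M i (f j)) :=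
            Equiv.sum_comp e (fun i => Complex.normSq (M i (f j)))
        _ = 1 := h3
  obtain ⟨w, hw0, hw1, hwsum⟩ := exists_eq_sum_perm_of_mem_doublyStochastic hds
  have hav : Antivary a b := fun i j hij =>
    ha (le_of_not_gt fun h => hij.not_ge (hb h.le))
  have hkey : ∑ i, ∑ j, a i * b j * c i j = ∑ σ : Equiv.Perm (Fin N),
      w σ * ∑ i, a i * b (σ i) := by
    have hcc : ∀ i j, c i j = ∑ σ : Equiv.Perm (Fin N), w σ * (σ.permMatrix ℝ) i j := by
      intro i j
      calc c i j = (∑ σ : Equiv.Perm (Fin N), w σ • σ.permMatrix ℝ) i j := by rw [hwsum]; rfl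
        _ = ∑ σ : Equiv.Perm (Fin N), w σ * (σ.permMatrix ℝ) i j := by
            simp only [Matrix.sum_apply, Matrix.smul_apply, smul_eq_mul]
    calc ∑ i, ∑ j, a i * b j * c i j
        = ∑ i, ∑ j, ∑ σ : Equiv.Perm (Fin N), w σ * ((σ.permMatrix ℝ) i j * (a i * b j)) := by
          refine Finset.sum_congr rfl fun i _ => Finset.sum_congr rfl fun j _ => ?_
          rw [hcc, Finset.mul_sum]
          exact Finset.sum_congr rfl fun σ _ => by ring
      _ = ∑ i, ∑ σ : Equiv.Perm (Fin N), ∑ j, w σ * ((σ.permMatrix ℝ) i j * (a i * b j)) :=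
          Finset.sum_congr rfl fun i _ => Finset.sum_comm
      _ = ∑ σ : Equiv.Perm (Fin N), ∑ i, ∑ j, w σ * ((σ.permMatrix ℝ) i j * (a i * b j)) :=
          Finset.sum_comm
      _ = ∑ σ : Equiv.Perm (Fin N), w σ * ∑ i, a i * b (σ i) := by
          refine Finset.sum_congr rfl fun σ _ => ?_
          rw [Finset.mul_sum]
          refine Finset.sum_congr rfl fun i _ => ?_
          rw [← Finset.mul_sum]
          congr 1
          have : ∀ j, (σ.permMatrix ℝ) i j * (a i * b j)
              = if j = σ i then a i * b j else 0 := by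
            intro j
            simp [Equiv.Perm.permMatrix, PEquiv.toMatrix_apply, Equiv.toPEquiv_apply,
              Option.mem_def, eq_comm]
          simp_rw [this]
          simp
  rw [hre2, hkey]
  calc ∑ i, a i * b i = ∑ σ : Equiv.Perm (Fin N), w σ * ∑ i, a i * b i := by
        rw [← Finset.sum_mul, hw1, one_mul]
    _ ≤ ∑ σ : Equiv.Perm (Fin N), w σ * ∑ i, a i * b (σ i) :=
        Finset.sum_le_sum fun σ _ =>
          mul_le_mul_of_nonneg_left (hav.sum_mul_le_sum_mul_comp_perm) (hw0 σ)
end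

section
/- Let K_q and K_r be Hermitian positive definite, Z_t and Z_r Hermitian positive definite, and S a matrix of compatible size. Then Tr[((Z_r ⊗ Z_t)^{-1} + K_r^{-1} ⊗ S* K_q^{-1} Sᵀ)^{-1}] = Σ_{n=1}^M σ_{r,n} Tr[(Z_t^{-1} + (σ_{r,n}/δ_{r,n}) S* K_q^{-1} Sᵀ)^{-1}], where σ_{r,n} are the eigenvalues of Z_r, δ_{r,n} those of K_r, and Z_r and K_r share the same eigenvectors with eigenvalues paired by the common eigenvector. -/
open Matrix Kronecker ComplexOrder

private def blk {M N : ℕ} (D : Fin M → Matrix (Fin N) (Fin N) ℂ) :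
    Matrix (Fin M × Fin N) (Fin M × Fin N) ℂ :=
  Matrix.of fun p q => if p.1 = q.1 then D p.1 p.2 q.2 else 0

private lemma blk_mul {M N : ℕ} (D E : Fin M → Matrix (Fin N) (Fin N) ℂ) :
    blk D * blk E = blk (fun n => D n * E n) := by
  ext ⟨n, i⟩ ⟨m, j⟩
  simp only [blk, Matrix.mul_apply, Matrix.of_apply, Fintype.sum_prod_type]
  rw [Finset.sum_eq_single n]
  · by_cases h : n = m <;> simp [h, Matrix.mul_apply]
  · intro r _ hr
    simp [Ne.symm hr]
  · simp

private lemma blk_one {M N : ℕ} :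
    blk (fun _ : Fin M => (1 : Matrix (Fin N) (Fin N) ℂ)) = 1 := by
  ext ⟨n, i⟩ ⟨m, j⟩
  simp [blk, Matrix.one_apply, Prod.ext_iff, ite_and]

private lemma blk_trace {M N : ℕ} (D : Fin M → Matrix (Fin N) (Fin N) ℂ) :
    (blk D).trace = ∑ n, (D n).trace := by
  simp [Matrix.trace, blk, Matrix.diag, Fintype.sum_prod_type]

private lemma blk_add {M N : ℕ} (D E : Fin M → Matrix (Fin N) (Fin N) ℂ) :
    blk D + blk E = blk (fun n => D n + E n) := by
  ext ⟨n, i⟩ ⟨m, j⟩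
  by_cases h : n = m <;> simp [blk, h]

private lemma diagonal_kronecker_eq_blk {M N : ℕ} (d : Fin M → ℂ)
    (Y : Matrix (Fin N) (Fin N) ℂ) :
    Matrix.diagonal d ⊗ₖ Y = blk (fun n => d n • Y) := by
  ext ⟨n, i⟩ ⟨m, j⟩
  by_cases h : n = m <;>
    simp [blk, Matrix.kroneckerMap_apply, Matrix.diagonal_apply, h]

private lemma posSemidef_real_smul {n : ℕ} {A : Matrix (Fin n) (Fin n) ℂ}
    (hA : A.PosSemidef) {c : ℝ} (hc : 0 ≤ c) : ((c : ℂ) • A).PosSemidef := by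
  constructor
  · show ((c : ℂ) • A)ᴴ = (c : ℂ) • A
    rw [Matrix.conjTranspose_smul, hA.1.eq, Complex.star_def, Complex.conj_ofReal]
  · intro x
    have hc' : (0 : ℂ) ≤ (c : ℂ) := by exact_mod_cast hc
    have h := mul_nonneg hc' (hA.2 x)
    simp only [Finsupp.mul_sum] at h
    refine le_of_le_of_eq h (Finset.sum_congr rfl fun i _ => Finset.sum_congr rfl fun j _ => ?_)
    simp only [Matrix.smul_apply, smul_eq_mul]
    ring

/-- Kronecker decomposition of the MSE: if Z_r and K_r are simultaneously
    diagonalized by a unitary U with positive eigenvalues σ, δ, then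
    Tr[((Z_r ⊗ Z_t)⁻¹ + K_r⁻¹ ⊗ S* K_q⁻¹ Sᵀ)⁻¹]
      = Σ_n σ_n Tr[(Z_t⁻¹ + (σ_n/δ_n) S* K_q⁻¹ Sᵀ)⁻¹]. -/
theorem mse_kronecker_decomposition {M N L : ℕ}
    (U : Matrix (Fin M) (Fin M) ℂ) (hU : U ∈ Matrix.unitaryGroup (Fin M) ℂ)
    (σ δ : Fin M → ℝ) (hσ : ∀ n, 0 < σ n) (hδ : ∀ n, 0 < δ n)
    (Zr Kr : Matrix (Fin M) (Fin M) ℂ)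
    (hZr : Zr = U * Matrix.diagonal (fun n => (σ n : ℂ)) * Uᴴ)
    (hKr : Kr = U * Matrix.diagonal (fun n => (δ n : ℂ)) * Uᴴ)
    (Zt : Matrix (Fin N) (Fin N) ℂ) (hZt : Zt.PosDef)
    (Kq : Matrix (Fin L) (Fin L) ℂ) (hKq : Kq.PosDef)
    (S : Matrix (Fin N) (Fin L) ℂ) :
    (((Zr ⊗ₖ Zt)⁻¹ + Kr⁻¹ ⊗ₖ (S.map (starRingEnd ℂ) * Kq⁻¹ * Sᵀ))⁻¹).trace =
      ∑ n, (σ n : ℂ) *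
        ((Zt⁻¹ + ((σ n / δ n : ℝ) : ℂ) •
          (S.map (starRingEnd ℂ) * Kq⁻¹ * Sᵀ))⁻¹).trace := by
  have hUU : Uᴴ * U = 1 := by
    have := hU.1
    rwa [Matrix.star_eq_conjTranspose] at this
  have hUU' : U * Uᴴ = 1 := by
    have := hU.2
    rwa [Matrix.star_eq_conjTranspose] at this
  set A := S.map (starRingEnd ℂ) * Kq⁻¹ * Sᵀ with hAdef
  have hA : A.PosSemidef := by
    have h1 : Sᵀᴴ = S.map (starRingEnd ℂ) := by
      ext i j
      rw [Matrix.conjTranspose_apply, Matrix.transpose_apply, Matrix.map_apply,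
        starRingEnd_apply]
    rw [hAdef, ← h1]
    exact hKq.inv.posSemidef.conjTranspose_mul_mul_same Sᵀ
  -- the per-block matrices
  set B : Fin M → Matrix (Fin N) (Fin N) ℂ :=
    fun n => Zt⁻¹ + ((σ n / δ n : ℝ) : ℂ) • A with hBdef
  have hB : ∀ n, (B n).PosDef := fun n =>
    hZt.inv.add_posSemidef (posSemidef_real_smul hA
      (le_of_lt (div_pos (hσ n) (hδ n))))
  have hBunit : ∀ n, IsUnit (B n).det := fun n =>
    (Matrix.isUnit_iff_isUnit_det _).1 (hB n).isUnit
  -- inverses of the conjugated diagonals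
  have key : ∀ (d : Fin M → ℝ), (∀ n, 0 < d n) →
      (U * Matrix.diagonal (fun n => (d n : ℂ)) * Uᴴ)⁻¹
        = U * Matrix.diagonal (fun n => ((d n : ℂ))⁻¹) * Uᴴ := by
    intro d hd
    apply Matrix.inv_eq_right_inv
    have hdd : Matrix.diagonal (fun n => (d n : ℂ)) *
        Matrix.diagonal (fun n => ((d n : ℂ))⁻¹) = 1 := by
      rw [Matrix.diagonal_mul_diagonal]
      have : (fun n => (d n : ℂ) * ((d n : ℂ))⁻¹) = fun _ => (1 : ℂ) := by
        funext n
        exact mul_inv_cancel₀ (by exact_mod_cast (hd n).ne')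
      rw [this, Matrix.diagonal_one]
    calc U * Matrix.diagonal (fun n => (d n : ℂ)) * Uᴴ *
          (U * Matrix.diagonal (fun n => ((d n : ℂ))⁻¹) * Uᴴ)
        = U * (Matrix.diagonal (fun n => (d n : ℂ)) * ((Uᴴ * U) *
            (Matrix.diagonal (fun n => ((d n : ℂ))⁻¹) * Uᴴ))) := by
          simp only [Matrix.mul_assoc]
      _ = 1 := by
          rw [hUU, Matrix.one_mul,
            ← Matrix.mul_assoc (Matrix.diagonal fun n => (d n : ℂ))
              (Matrix.diagonal fun n => ((d n : ℂ))⁻¹) Uᴴ,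
            hdd, Matrix.one_mul, hUU']
  have hZri : Zr⁻¹ = U * Matrix.diagonal (fun n => ((σ n : ℂ))⁻¹) * Uᴴ := by
    rw [hZr]; exact key σ hσ
  have hKri : Kr⁻¹ = U * Matrix.diagonal (fun n => ((δ n : ℂ))⁻¹) * Uᴴ := by
    rw [hKr]; exact key δ hδ
  -- block forms
  set F : Fin M → Matrix (Fin N) (Fin N) ℂ :=
    fun n => ((σ n : ℂ))⁻¹ • Zt⁻¹ + ((δ n : ℂ))⁻¹ • A with hFdef
  set G : Fin M → Matrix (Fin N) (Fin N) ℂ :=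
    fun n => (σ n : ℂ) • (B n)⁻¹ with hGdef
  have hFG : ∀ n, F n * G n = 1 := by
    intro n
    have hσn : ((σ n : ℂ)) ≠ 0 := by exact_mod_cast (hσ n).ne'
    have hδn : ((δ n : ℂ)) ≠ 0 := by exact_mod_cast (hδ n).ne'
    have hscal : ((σ n : ℂ))⁻¹ * ((σ n / δ n : ℝ) : ℂ) = ((δ n : ℂ))⁻¹ := by
      push_cast
      field_simp
    have hF' : F n = ((σ n : ℂ))⁻¹ • B n := by
      show ((σ n : ℂ))⁻¹ • Zt⁻¹ + ((δ n : ℂ))⁻¹ • A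
          = ((σ n : ℂ))⁻¹ • (Zt⁻¹ + ((σ n / δ n : ℝ) : ℂ) • A)
      rw [smul_add, smul_smul, hscal]
    have hG' : G n = (σ n : ℂ) • (B n)⁻¹ := rfl
    rw [hF', hG', Matrix.smul_mul, Matrix.mul_smul, smul_smul,
      inv_mul_cancel₀ hσn, one_smul, Matrix.mul_nonsing_inv _ (hBunit n)]
  -- factor the big matrix
  have hfactor :
      (Zr ⊗ₖ Zt)⁻¹ + Kr⁻¹ ⊗ₖ A =
        (U ⊗ₖ (1 : Matrix (Fin N) (Fin N) ℂ)) * blk F *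
          (Uᴴ ⊗ₖ (1 : Matrix (Fin N) (Fin N) ℂ)) := by
    have h1 : (Zr ⊗ₖ Zt)⁻¹ = Zr⁻¹ ⊗ₖ Zt⁻¹ := Matrix.inv_kronecker _ _
    have hz : Zr⁻¹ ⊗ₖ Zt⁻¹ =
        (U ⊗ₖ (1 : Matrix (Fin N) (Fin N) ℂ)) *
          (Matrix.diagonal (fun n => ((σ n : ℂ))⁻¹) ⊗ₖ Zt⁻¹) *
          (Uᴴ ⊗ₖ (1 : Matrix (Fin N) (Fin N) ℂ)) := by
      rw [hZri, ← Matrix.mul_kronecker_mul, ← Matrix.mul_kronecker_mul,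
        Matrix.one_mul, Matrix.mul_one]
    have hk : Kr⁻¹ ⊗ₖ A =
        (U ⊗ₖ (1 : Matrix (Fin N) (Fin N) ℂ)) *
          (Matrix.diagonal (fun n => ((δ n : ℂ))⁻¹) ⊗ₖ A) *
          (Uᴴ ⊗ₖ (1 : Matrix (Fin N) (Fin N) ℂ)) := by
      rw [hKri, ← Matrix.mul_kronecker_mul, ← Matrix.mul_kronecker_mul,
        Matrix.one_mul, Matrix.mul_one]
    rw [h1, hz, hk, ← Matrix.add_mul, ← Matrix.mul_add,
      diagonal_kronecker_eq_blk, diagonal_kronecker_eq_blk, blk_add]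
  have hUk : (Uᴴ ⊗ₖ (1 : Matrix (Fin N) (Fin N) ℂ)) *
      (U ⊗ₖ (1 : Matrix (Fin N) (Fin N) ℂ)) = 1 := by
    rw [← Matrix.mul_kronecker_mul, hUU, Matrix.one_mul, Matrix.one_kronecker_one]
  have hUk' : (U ⊗ₖ (1 : Matrix (Fin N) (Fin N) ℂ)) *
      (Uᴴ ⊗ₖ (1 : Matrix (Fin N) (Fin N) ℂ)) = 1 := by
    rw [← Matrix.mul_kronecker_mul, hUU', Matrix.one_mul, Matrix.one_kronecker_one]
  -- the explicit inverse
  have hinv : ((Zr ⊗ₖ Zt)⁻¹ + Kr⁻¹ ⊗ₖ A)⁻¹ =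
      (U ⊗ₖ (1 : Matrix (Fin N) (Fin N) ℂ)) * blk G *
        (Uᴴ ⊗ₖ (1 : Matrix (Fin N) (Fin N) ℂ)) := by
    apply Matrix.inv_eq_right_inv
    rw [hfactor]
    calc (U ⊗ₖ (1 : Matrix (Fin N) (Fin N) ℂ)) * blk F *
          (Uᴴ ⊗ₖ (1 : Matrix (Fin N) (Fin N) ℂ)) *
          ((U ⊗ₖ (1 : Matrix (Fin N) (Fin N) ℂ)) * blk G *
            (Uᴴ ⊗ₖ (1 : Matrix (Fin N) (Fin N) ℂ)))
        = (U ⊗ₖ (1 : Matrix (Fin N) (Fin N) ℂ)) * (blk F *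
            (((Uᴴ ⊗ₖ (1 : Matrix (Fin N) (Fin N) ℂ)) *
              (U ⊗ₖ (1 : Matrix (Fin N) (Fin N) ℂ))) * (blk G *
              (Uᴴ ⊗ₖ (1 : Matrix (Fin N) (Fin N) ℂ))))) := by
          simp only [Matrix.mul_assoc]
      _ = 1 := by
          rw [hUk, Matrix.one_mul, ← Matrix.mul_assoc (blk F) (blk G), blk_mul]
          have : (fun n => F n * G n) = fun _ => (1 : Matrix (Fin N) (Fin N) ℂ) :=
            funext hFG
          rw [this, blk_one, Matrix.one_mul, hUk']
  rw [hinv]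
  rw [Matrix.mul_assoc, Matrix.trace_mul_comm, Matrix.mul_assoc, hUk,
    Matrix.mul_one, blk_trace]
  refine Finset.sum_congr rfl fun n _ => ?_
  have hG' : G n = (σ n : ℂ) • (B n)⁻¹ := rfl
  rw [hG', Matrix.trace_smul, smul_eq_mul]
end

section
/- Let Z_t be Hermitian positive definite of size (N1+N2) with eigenvalues σ_1 ≥ σ_2 ≥ … ≥ σ_{N1+N2}, and suppose P is Hermitian positive semidefinite of the same size with rank(P) ≤ L < N1+N2. Then Tr[(Z_t^{-1} + P)^{-1}] ≥ Σ_{m=L+1}^{N1+N2} σ_m. -/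
open Matrix ComplexOrder

lemma quadform_expand {n : Type*} [Fintype n] [DecidableEq n] {Z : Matrix n n ℂ}
    (hZ : Z.IsHermitian) (u : n → ℂ) :
    (star u ⬝ᵥ Z *ᵥ u).re =
      ∑ m, hZ.eigenvalues m * Complex.normSq (((star hZ.eigenvectorUnitary : Matrix n n ℂ) *ᵥ u) m) := by
  set V : Matrix n n ℂ := (hZ.eigenvectorUnitary : Matrix n n ℂ) with hV
  set w : n → ℂ := (star V) *ᵥ u with hw
  have h1 : star u ⬝ᵥ Z *ᵥ u = star w ⬝ᵥ (diagonal (RCLike.ofReal ∘ hZ.eigenvalues)) *ᵥ w := by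
    conv_lhs => rw [hZ.spectral_theorem, Unitary.conjStarAlgAut_apply]
    rw [← Matrix.mulVec_mulVec, ← Matrix.mulVec_mulVec, Matrix.dotProduct_mulVec (star u)]
    congr 1
    rw [hw, Matrix.star_mulVec]
    simp [Matrix.star_eq_conjTranspose]
    rfl
  rw [h1]
  simp only [dotProduct, Matrix.mulVec_diagonal, Function.comp_apply, Pi.star_apply]
  rw [Complex.re_sum]
  refine Finset.sum_congr rfl fun m _ => ?_
  simp only [RCLike.star_def, RCLike.ofReal_re, Complex.mul_re, Complex.mul_im, Complex.conj_re, Complex.conj_im, Complex.normSq_apply, RCLike.ofReal_im, Complex.ofReal_re, Complex.ofReal_im, show ∀ r:ℝ, (RCLike.ofReal r : ℂ) = Complex.ofReal r from fun _ => rfl]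
  ring

lemma trace_eq_sum_eig {n : Type*} [Fintype n] [DecidableEq n] {A : Matrix n n ℂ}
    (hA : A.IsHermitian) : A.trace = ∑ i, (hA.eigenvalues i : ℂ) := by
  conv_lhs => rw [hA.spectral_theorem, Unitary.conjStarAlgAut_apply]
  rw [Matrix.trace_mul_cycle, Unitary.coe_star_mul_self, Matrix.one_mul, Matrix.trace_diagonal]
  simp [Function.comp]

lemma card_filter_lt {N L : ℕ} (hL : L < N) :
    (Finset.univ.filter (fun m : Fin N => (m : ℕ) < L)).card = L := by
  have h : (Finset.univ.filter (fun m : Fin N => (m : ℕ) < L)) =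
      (Finset.range L).attachFin (fun m hm => lt_trans (Finset.mem_range.mp hm) hL) := by
    ext m
    simp [Finset.mem_attachFin]
  rw [h, Finset.card_attachFin, Finset.card_range]

lemma key_trace_bound {N L : ℕ} (hL : L < N) {Z K : Matrix (Fin N) (Fin N) ℂ}
    (hZ : Z.PosDef) (hord : Antitone hZ.1.eigenvalues) (hK : K.PosSemidef)
    (hZK : (Z - K).PosSemidef) (hr : K.rank ≤ L) :
    K.trace.re ≤ ∑ m ∈ Finset.univ.filter (fun m : Fin N => (m : ℕ) < L), hZ.1.eigenvalues m := by
  classical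
  set σ := hZ.1.eigenvalues with hσ
  set μ := hK.1.eigenvalues with hμ
  set V : Matrix (Fin N) (Fin N) ℂ := (hZ.1.eigenvectorUnitary : Matrix (Fin N) (Fin N) ℂ) with hV
  set U : Matrix (Fin N) (Fin N) ℂ := (hK.1.eigenvectorUnitary : Matrix (Fin N) (Fin N) ℂ) with hU
  set W : Matrix (Fin N) (Fin N) ℂ := star V * U with hW
  set T : Finset (Fin N) := Finset.univ.filter (fun i => μ i ≠ 0) with hT
  -- unitarity of W
  have hUU : U * star U = 1 := Matrix.mem_unitaryGroup_iff.mp (hK.1.eigenvectorUnitary).2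
  have hVV : V * star V = 1 := Matrix.mem_unitaryGroup_iff.mp (hZ.1.eigenvectorUnitary).2
  have hUU' : star U * U = 1 := Matrix.mem_unitaryGroup_iff'.mp (hK.1.eigenvectorUnitary).2
  have hVV' : star V * V = 1 := Matrix.mem_unitaryGroup_iff'.mp (hZ.1.eigenvectorUnitary).2
  have hst : star W = star U * V := by rw [hW, Matrix.star_mul, star_star]
  have hWW : W * star W = 1 := by
    rw [hW, hst, Matrix.mul_assoc, ← Matrix.mul_assoc U (star U) V, hUU, Matrix.one_mul, hVV']
  have hWW' : star W * W = 1 := by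
    rw [hW, hst, Matrix.mul_assoc, ← Matrix.mul_assoc V (star V) U, hVV, Matrix.one_mul, hUU']
  -- row sums of |W|² equal 1
  have hrow : ∀ m, ∑ i, Complex.normSq (W m i) = 1 := by
    intro m
    have := congrArg (fun M : Matrix (Fin N) (Fin N) ℂ => (M m m).re) hWW
    simpa [Matrix.mul_apply, Matrix.conjTranspose_apply, Matrix.one_apply,
      Complex.re_sum, Complex.mul_conj, Matrix.star_eq_conjTranspose] using this
  have hcol : ∀ i, ∑ m, Complex.normSq (W m i) = 1 := by
    intro i
    have := congrArg (fun M : Matrix (Fin N) (Fin N) ℂ => (M i i).re) hWW'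
    simpa [Matrix.mul_apply, Matrix.conjTranspose_apply, Matrix.one_apply,
      Complex.re_sum, Complex.normSq_apply, Complex.mul_conj, Matrix.star_eq_conjTranspose] using this
  set c : Fin N → ℝ := fun m => ∑ i ∈ T, Complex.normSq (W m i) with hc
  have hc0 : ∀ m, 0 ≤ c m := fun m => Finset.sum_nonneg fun i _ => Complex.normSq_nonneg _
  have hc1 : ∀ m, c m ≤ 1 := by
    intro m
    rw [hc]
    calc ∑ i ∈ T, Complex.normSq (W m i) ≤ ∑ i, Complex.normSq (W m i) :=
          Finset.sum_le_sum_of_subset_of_nonneg (Finset.subset_univ T)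
            (fun i _ _ => Complex.normSq_nonneg _)
      _ = 1 := hrow m
  have hTcard : T.card ≤ L := by
    have := hK.1.rank_eq_card_non_zero_eigs
    rw [Fintype.card_subtype] at this
    exact this ▸ hr
  have hcsum : ∑ m, c m ≤ (L : ℝ) := by
    rw [hc]
    have : ∑ m, ∑ i ∈ T, Complex.normSq (W m i) = ∑ i ∈ T, ∑ m, Complex.normSq (W m i) :=
      Finset.sum_comm
    rw [this]
    simp only [hcol]
    simpa using (Nat.cast_le (α := ℝ)).mpr hTcard
  -- trace of K
  have htr : K.trace.re = ∑ i, μ i := by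
    rw [trace_eq_sum_eig hK.1, Complex.re_sum]
    simp
    rfl
  have htr2 : ∑ i, μ i = ∑ i ∈ T, μ i :=
    (Finset.sum_filter_of_ne (fun i _ h => h)).symm
  -- each eigenvalue bounded by quadratic form of Z
  have hbound : ∀ i, μ i ≤ (star ⇑(hK.1.eigenvectorBasis i) ⬝ᵥ Z *ᵥ ⇑(hK.1.eigenvectorBasis i)).re := by
    intro i
    have he : μ i = (star ⇑(hK.1.eigenvectorBasis i) ⬝ᵥ K *ᵥ ⇑(hK.1.eigenvectorBasis i)).re :=
      hK.1.eigenvalues_eq i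
    have hnn := hZK.re_dotProduct_nonneg ⇑(hK.1.eigenvectorBasis i)
    rw [Matrix.sub_mulVec, dotProduct_sub, map_sub] at hnn
    simp only [RCLike.re_to_complex] at hnn
    linarith [he ▸ hnn]
  -- rewrite quadratic forms via spectral decomposition of Z
  have hq : ∀ i, (star ⇑(hK.1.eigenvectorBasis i) ⬝ᵥ Z *ᵥ ⇑(hK.1.eigenvectorBasis i)).re
      = ∑ m, σ m * Complex.normSq (W m i) := by
    intro i
    rw [quadform_expand hZ.1]
    refine Finset.sum_congr rfl fun m _ => ?_
    congr 2
  have hmain : K.trace.re ≤ ∑ m, σ m * c m := by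
    rw [htr, htr2]
    calc ∑ i ∈ T, μ i ≤ ∑ i ∈ T, ∑ m, σ m * Complex.normSq (W m i) :=
          Finset.sum_le_sum fun i _ => (hbound i).trans_eq (hq i)
      _ = ∑ m, σ m * c m := by
          rw [Finset.sum_comm]
          exact Finset.sum_congr rfl fun m _ => by rw [hc, Finset.mul_sum]
  -- rearrangement bound
  set s : ℝ := σ ⟨L, hL⟩ with hs
  have hs0 : 0 ≤ s := hZ.posSemidef.eigenvalues_nonneg _
  have hσ0 : ∀ m, 0 ≤ σ m := fun m => hZ.posSemidef.eigenvalues_nonneg _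
  have hstep : ∀ m : Fin N, σ m * c m ≤ (if (m : ℕ) < L then σ m - s else 0) + s * c m := by
    intro m
    by_cases h : (m : ℕ) < L
    · simp only [h, if_pos]
      have hle : s ≤ σ m := hord (by rw [Fin.le_def]; exact h.le)
      nlinarith [hc1 m, hc0 m]
    · simp only [h, if_neg, not_false_iff, zero_add]
      have hle : σ m ≤ s := hord (by rw [Fin.le_def]; exact not_lt.mp h)
      nlinarith [hc0 m]
  calc K.trace.re ≤ ∑ m, σ m * c m := hmain
    _ ≤ ∑ m : Fin N, ((if (m : ℕ) < L then σ m - s else 0) + s * c m) :=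
        Finset.sum_le_sum fun m _ => hstep m
    _ = (∑ m ∈ Finset.univ.filter (fun m : Fin N => (m : ℕ) < L), (σ m - s)) + s * ∑ m : Fin N, c m := by
        rw [Finset.sum_add_distrib, ← Finset.mul_sum, ← Finset.sum_filter]
    _ = (∑ m ∈ Finset.univ.filter (fun m : Fin N => (m : ℕ) < L), σ m) - s * L + s * ∑ m : Fin N, c m := by
        rw [Finset.sum_sub_distrib, Finset.sum_const, card_filter_lt hL, nsmul_eq_mul, mul_comm]
    _ ≤ ∑ m ∈ Finset.univ.filter (fun m : Fin N => (m : ℕ) < L), σ m := by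
        have : s * ∑ m : Fin N, c m ≤ s * L := mul_le_mul_of_nonneg_left hcsum hs0
        linarith


/-- MSE floor for short training: if P is PSD of rank ≤ L < N1+N2 and Z_t is PD
    with decreasingly ordered eigenvalues σ, then
    Tr[(Z_t⁻¹ + P)⁻¹] ≥ Σ_{m=L+1}^{N1+N2} σ_m. -/
theorem mse_floor_of_rank_deficient_training {N1 N2 L : ℕ} (hL : L < N1 + N2)
    (Zt : Matrix (Fin (N1 + N2)) (Fin (N1 + N2)) ℂ) (hZt : Zt.PosDef)
    (hord : Antitone hZt.1.eigenvalues)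
    (P : Matrix (Fin (N1 + N2)) (Fin (N1 + N2)) ℂ) (hP : P.PosSemidef)
    (hrank : P.rank ≤ L) :
    (∑ m ∈ Finset.univ.filter (fun m : Fin (N1 + N2) => L ≤ (m : ℕ)),
        hZt.1.eigenvalues m) ≤ ((Zt⁻¹ + P)⁻¹).trace.re := by
  classical
  set M : Matrix (Fin (N1 + N2)) (Fin (N1 + N2)) ℂ := Zt⁻¹ + P with hMdef
  have hMpd : M.PosDef := hZt.inv.add_posSemidef hP
  have hZ1 : Zt⁻¹ * Zt = 1 := Matrix.nonsing_inv_mul _ ((Matrix.isUnit_iff_isUnit_det _).mp hZt.isUnit)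
  have hZ2 : Zt * Zt⁻¹ = 1 := Matrix.mul_nonsing_inv _ ((Matrix.isUnit_iff_isUnit_det _).mp hZt.isUnit)
  have hM1 : M⁻¹ * M = 1 := Matrix.nonsing_inv_mul _ ((Matrix.isUnit_iff_isUnit_det _).mp hMpd.isUnit)
  have hM2 : M * M⁻¹ = 1 := Matrix.mul_nonsing_inv _ ((Matrix.isUnit_iff_isUnit_det _).mp hMpd.isUnit)
  set K : Matrix (Fin (N1 + N2)) (Fin (N1 + N2)) ℂ := Zt - M⁻¹ with hKdef
  have hMZ : M * Zt = 1 + P * Zt := by rw [hMdef, add_mul, hZ1]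
  have hZM : Zt * M = 1 + Zt * P := by rw [hMdef, mul_add, hZ2]
  have hK1 : K = M⁻¹ * P * Zt := by
    calc K = M⁻¹ * (M * Zt) - M⁻¹ := by rw [hKdef, ← Matrix.mul_assoc, hM1, Matrix.one_mul]
      _ = M⁻¹ * (P * Zt) := by rw [hMZ, Matrix.mul_add, Matrix.mul_one]; abel
      _ = M⁻¹ * P * Zt := (Matrix.mul_assoc _ _ _).symm
  have hK2 : K = M⁻¹ * (P + P * Zt * P) * M⁻¹ := by
    calc K = M⁻¹ * P * Zt := hK1
      _ = M⁻¹ * P * (Zt * M * M⁻¹) := by rw [Matrix.mul_assoc Zt M M⁻¹, hM2, Matrix.mul_one]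
      _ = M⁻¹ * P * ((1 + Zt * P) * M⁻¹) := by rw [hZM]
      _ = M⁻¹ * (P + P * Zt * P) * M⁻¹ := by noncomm_ring
  have hKpsd : K.PosSemidef := by
    have h5 : (P * Zt * Pᴴ).PosSemidef := hZt.posSemidef.mul_mul_conjTranspose_same P
    rw [hP.1.eq] at h5
    have hQ : (P + P * Zt * P).PosSemidef := hP.add h5
    have h6 := hQ.mul_mul_conjTranspose_same (M⁻¹)
    rw [hMpd.inv.1.eq] at h6
    rwa [hK2]
  have hrK : K.rank ≤ L := by
    rw [hK1]
    exact le_trans (le_trans (Matrix.rank_mul_le_left _ _) (Matrix.rank_mul_le_right _ _)) hrank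
  have hZKpsd : (Zt - K).PosSemidef := by
    have h7 : Zt - K = M⁻¹ := by rw [hKdef, sub_sub_cancel]
    rw [h7]; exact hMpd.inv.posSemidef
  have hkey := key_trace_bound hL hZt hord hKpsd hZKpsd hrK
  have htrZ : Zt.trace.re = ∑ m, hZt.1.eigenvalues m := by
    rw [trace_eq_sum_eig hZt.1, Complex.re_sum]; simp
  have htrM : M⁻¹.trace.re = Zt.trace.re - K.trace.re := by
    have h8 : M⁻¹ = Zt - K := by rw [hKdef, sub_sub_cancel]
    rw [h8, Matrix.trace_sub, Complex.sub_re]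
  have hsplit : ∑ m, hZt.1.eigenvalues m
      = (∑ m ∈ Finset.univ.filter (fun m : Fin (N1 + N2) => (m : ℕ) < L), hZt.1.eigenvalues m)
      + ∑ m ∈ Finset.univ.filter (fun m : Fin (N1 + N2) => L ≤ (m : ℕ)), hZt.1.eigenvalues m := by
    rw [← Finset.sum_filter_add_sum_filter_not Finset.univ
      (fun m : Fin (N1 + N2) => (m : ℕ) < L) hZt.1.eigenvalues]
    congr 1
    apply Finset.sum_congr _ (fun _ _ => rfl)
    ext m; simp [not_lt]
  have hgoal : ((Zt⁻¹ + P)⁻¹).trace.re = M⁻¹.trace.re := rfl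
  rw [hgoal, htrM, htrZ, hsplit]
  linarith [hkey]
end

section
/- Let Z be Hermitian positive definite with Z = U Diag(σ_m) Uᴴ, σ_m > 0 in decreasing order, and constants α_n > 0, weights w_n > 0 (n = 1,…,M), power budget τ > 0. Among Hermitian PSD matrices Q with Tr(Q) ≤ τ that commute with Z, the minimizer of Σ_n w_n Tr[(Z^{-1} + α_n Q)^{-1}] is Q = U Diag(p_m) Uᴴ where the powers p_m ≥ 0 satisfy the water-filling condition: Σ_n w_n α_n σ_m² / (1 + α_n σ_m p_m)² = λ for all m with p_m > 0, and Σ_n w_n α_n σ_m² ≤ λ for m with p_m = 0, with λ chosen so that Σ_m p_m = τ. -/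
open Matrix ComplexOrder

lemma inv_diag_entry {N : ℕ} {A : Matrix (Fin N) (Fin N) ℂ} (hA : A.PosDef) (m : Fin N) :
    1 / (A m m).re ≤ (A⁻¹ m m).re := by
  have hdet : IsUnit A.det := (Matrix.isUnit_iff_isUnit_det A).mp hA.isUnit
  have h1 : A * A⁻¹ = 1 := Matrix.mul_nonsing_inv A hdet
  have h2 : A⁻¹ * A = 1 := Matrix.nonsing_inv_mul A hdet
  haveI := hA.isUnit.invertible
  have hinvH : A⁻¹.IsHermitian := hA.1.inv
  have hdiag : 0 < (A m m).re := by
    have h := hA.dotProduct_mulVec_pos (x := Pi.single m 1) (by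
      intro hc
      have := congrFun hc m
      simp at this)
    have he : star (Pi.single m 1 : Fin N → ℂ) ⬝ᵥ (A *ᵥ Pi.single m 1) = A m m := by
      simp [Matrix.mulVec_single, dotProduct, Pi.single_apply, apply_ite]
    rw [he] at h
    exact (Complex.lt_def.mp h).1
  set t : ℝ := 1 / (A m m).re with ht
  set x : Fin N → ℂ := fun k => A⁻¹ k m - (if k = m then (t:ℂ) else 0) with hx
  have hAx : A *ᵥ x = fun i => (if i = m then 1 else 0) - (t:ℂ) * A i m := by
    funext i
    simp only [Matrix.mulVec, dotProduct, hx, mul_sub, Finset.sum_sub_distrib,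
      mul_ite, mul_zero]
    congr 1
    · rw [← Matrix.mul_apply, h1]
      simp [Matrix.one_apply]
    · rw [Finset.sum_ite_eq' Finset.univ m (fun j => A i j * (t:ℂ))]
      simp [mul_comm]
  have hconj : ∀ i, (starRingEnd ℂ) (A⁻¹ i m) = A⁻¹ m i := fun i => hinvH.apply m i
  have S3 : ∑ i, A⁻¹ m i * A i m = 1 := by
    rw [← Matrix.mul_apply, h2]; simp
  have key : star x ⬝ᵥ (A *ᵥ x) = A⁻¹ m m - ((2*t : ℝ):ℂ) + ((t^2 : ℝ):ℂ) * A m m := by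
    rw [hAx]
    simp only [dotProduct, Pi.star_apply, hx, star_sub, Complex.star_def]
    calc ∑ i, ((starRingEnd ℂ) (A⁻¹ i m) - (starRingEnd ℂ) (if i = m then (t:ℂ) else 0)) *
          ((if i = m then 1 else 0) - (t:ℂ) * A i m)
        = ∑ i, (A⁻¹ m i * (if i = m then (1:ℂ) else 0)
            - (if i = m then (t:ℂ) else 0) * (if i = m then (1:ℂ) else 0)
            - (t:ℂ) * (A⁻¹ m i * A i m) + (t:ℂ) * ((if i = m then (t:ℂ) else 0) * A i m)) := by
          refine Finset.sum_congr rfl fun i _ => ?_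
          rw [hconj i]
          have : (starRingEnd ℂ) (if i = m then (t:ℂ) else 0) = if i = m then (t:ℂ) else 0 := by
            split_ifs <;> simp [Complex.conj_ofReal]
          rw [this]; ring
      _ = A⁻¹ m m - ((2*t : ℝ):ℂ) + ((t^2 : ℝ):ℂ) * A m m := by
          simp only [Finset.sum_add_distrib, Finset.sum_sub_distrib, ← Finset.mul_sum]
          rw [S3]
          simp only [mul_ite, mul_one, mul_zero, ite_mul, zero_mul,
            Finset.sum_ite_eq' Finset.univ m]
          simp only [Finset.mem_univ, if_true]
          push_cast
          ring
  have hpsd := hA.posSemidef.dotProduct_mulVec_nonneg x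
  rw [key] at hpsd
  have hre := (Complex.le_def.mp hpsd).1
  simp only [Complex.add_re, Complex.sub_re, Complex.mul_re, Complex.ofReal_re,
    Complex.ofReal_im, Complex.zero_re, zero_mul, sub_zero] at hre
  have h3 : t^2 * (A m m).re = t := by
    rw [ht]; field_simp
  linarith [hre, h3]

private lemma tangentWF (s a x y : ℝ) (hs : 0 < s) (ha : 0 < a) (hx : 0 ≤ x) (hy : 0 ≤ y) :
    s / (1 + a*s*x) - (a*s^2/(1+a*s*x)^2) * (y - x) ≤ s / (1 + a*s*y) := by
  have h1 : 0 < 1 + a*s*x := by positivity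
  have h2 : 0 < 1 + a*s*y := by positivity
  have key : s/(1+a*s*y) - (s/(1+a*s*x) - (a*s^2/(1+a*s*x)^2)*(y-x))
      = s*(a*s*y - a*s*x)^2 / ((1+a*s*y)*(1+a*s*x)^2) := by
    field_simp
    ring
  nlinarith [div_nonneg (by positivity : (0:ℝ) ≤ s*(a*s*y - a*s*x)^2)
    (by positivity : (0:ℝ) ≤ (1+a*s*y)*(1+a*s*x)^2)]

private lemma recipWF (s a x : ℝ) (hs : 0 < s) (ha : 0 < a) (hx : 0 ≤ x) :
    (s⁻¹ + a*x)⁻¹ = s/(1+a*s*x) := by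
  have h1 : 0 < 1 + a*s*x := by positivity
  rw [inv_eq_one_div, div_eq_div_iff (by positivity : (0:ℝ) < s⁻¹ + a*x).ne' h1.ne']
  field_simp

private lemma scalarWF {N M : ℕ} (σ : Fin N → ℝ) (hσ : ∀ m, 0 < σ m)
    (α w : Fin M → ℝ) (hα : ∀ n, 0 < α n) (hw : ∀ n, 0 < w n)
    (τ : ℝ) (hτ : 0 < τ)
    (p : Fin N → ℝ) (hp : ∀ m, 0 ≤ p m) (hpsum : ∑ m, p m = τ)
    (lam : ℝ)
    (hkkt1 : ∀ m, 0 < p m →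
      ∑ n, w n * α n * σ m ^ 2 / (1 + α n * σ m * p m) ^ 2 = lam)
    (hkkt2 : ∀ m, p m = 0 → ∑ n, w n * α n * σ m ^ 2 ≤ lam)
    (q : Fin N → ℝ) (hq : ∀ m, 0 ≤ q m) (hqsum : ∑ m, q m ≤ τ) :
    ∑ m, ∑ n, w n * (σ m / (1 + α n * σ m * p m)) ≤
      ∑ m, ∑ n, w n * (σ m / (1 + α n * σ m * q m)) := by
  have hlam : 0 ≤ lam := by
    obtain ⟨m0, hm0⟩ : ∃ m, 0 < p m := by
      by_contra h
      push_neg at h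
      have hz : ∀ m, p m = 0 := fun m => le_antisymm (h m) (hp m)
      have : ∑ m, p m = 0 := by simp [hz]
      linarith [hpsum ▸ this]
    rw [← hkkt1 m0 hm0]
    apply Finset.sum_nonneg
    intro n _
    exact div_nonneg (mul_nonneg (mul_nonneg (hw n).le (hα n).le) (sq_nonneg _)) (sq_nonneg _)
  have key : ∀ m, ∑ n, w n * (σ m / (1 + α n * σ m * p m)) - lam * (q m - p m) ≤
      ∑ n, w n * (σ m / (1 + α n * σ m * q m)) := by
    intro m
    have hc : ∀ n ∈ Finset.univ, w n * (σ m / (1 + α n * σ m * p m)) -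
        (w n * α n * σ m^2/(1+α n * σ m * p m)^2) * (q m - p m) ≤
        w n * (σ m / (1 + α n * σ m * q m)) := by
      intro n _
      have ht := tangentWF (σ m) (α n) (p m) (q m) (hσ m) (hα n) (hp m) (hq m)
      have h2 := mul_le_mul_of_nonneg_left ht (hw n).le
      have e : w n * (σ m / (1 + α n * σ m * p m)) -
          (w n * α n * σ m^2/(1+α n * σ m * p m)^2) * (q m - p m)
          = w n * (σ m / (1 + α n * σ m * p m) -
            (α n * σ m^2/(1+α n * σ m * p m)^2) * (q m - p m)) := by ring
      rw [e]
      exact h2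
    have hsum := Finset.sum_le_sum hc
    rw [Finset.sum_sub_distrib, ← Finset.sum_mul] at hsum
    rcases eq_or_lt_of_le (hp m) with h0 | hpos
    · have hq0 : (0:ℝ) ≤ q m - p m := by rw [← h0]; simpa using hq m
      have hcm : ∑ n, w n * α n * σ m^2/(1+α n * σ m * p m)^2 ≤ lam := by
        have : ∑ n, w n * α n * σ m^2/(1+α n * σ m * p m)^2 = ∑ n, w n * α n * σ m^2 := by
          refine Finset.sum_congr rfl fun n _ => ?_
          rw [← h0]
          norm_num
        rw [this]
        exact hkkt2 m h0.symm
      have := mul_le_mul_of_nonneg_right hcm hq0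
      linarith
    · rw [hkkt1 m hpos] at hsum
      linarith
  have h := Finset.sum_le_sum (s := Finset.univ) (fun m (_ : m ∈ Finset.univ) => key m)
  rw [Finset.sum_sub_distrib, ← Finset.mul_sum, Finset.sum_sub_distrib, hpsum] at h
  have h2 : lam * (∑ m, q m - τ) ≤ 0 :=
    mul_nonpos_of_nonneg_of_nonpos hlam (sub_nonpos.2 hqsum)
  linarith

section helpers
variable {N : ℕ} {U : Matrix (Fin N) (Fin N) ℂ}

private lemma conj_mulWF (hU2 : Uᴴ * U = 1) (X Y : Matrix (Fin N) (Fin N) ℂ) :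
    (U * X * Uᴴ) * (U * Y * Uᴴ) = U * (X * Y) * Uᴴ := by
  simp only [Matrix.mul_assoc]
  rw [← Matrix.mul_assoc Uᴴ U (Y * Uᴴ), hU2, Matrix.one_mul]

private lemma conj_traceWF (hU2 : Uᴴ * U = 1) (X : Matrix (Fin N) (Fin N) ℂ) :
    (U * X * Uᴴ).trace = X.trace := by
  rw [Matrix.trace_mul_cycle, hU2, Matrix.one_mul]

private lemma conj_invWF (hU1 : U * Uᴴ = 1) (hU2 : Uᴴ * U = 1)
    {X : Matrix (Fin N) (Fin N) ℂ} (hX : X * X⁻¹ = 1) :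
    (U * X * Uᴴ)⁻¹ = U * X⁻¹ * Uᴴ := by
  apply Matrix.inv_eq_right_inv
  rw [conj_mulWF hU2, hX, Matrix.mul_one, hU1]

private lemma diag_invWF (d : Fin N → ℝ) (hd : ∀ m, 0 < d m) :
    (Matrix.diagonal (fun m => (d m : ℂ))) *
      (Matrix.diagonal (fun m => (((d m)⁻¹ : ℝ) : ℂ))) = 1 := by
  rw [Matrix.diagonal_mul_diagonal]
  convert Matrix.diagonal_one with m
  push_cast
  rw [mul_inv_cancel₀]
  exact_mod_cast (hd m).ne'

/-- trace of inverse of conjugated positive diagonal -/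
private lemma conj_diag_inv_traceWF (hU1 : U * Uᴴ = 1) (hU2 : Uᴴ * U = 1)
    (d : Fin N → ℝ) (hd : ∀ m, 0 < d m) :
    ((U * Matrix.diagonal (fun m => (d m : ℂ)) * Uᴴ)⁻¹).trace.re = ∑ m, (d m)⁻¹ := by
  have hX : (Matrix.diagonal (fun m => (d m : ℂ)))⁻¹
      = Matrix.diagonal (fun m => (((d m)⁻¹ : ℝ) : ℂ)) :=
    Matrix.inv_eq_right_inv (diag_invWF d hd)
  rw [conj_invWF hU1 hU2 (by rw [hX]; exact diag_invWF d hd), hX,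
    conj_traceWF hU2, Matrix.trace_diagonal]
  rw [Complex.re_sum]
  norm_num

private lemma smul_psdWF {B : Matrix (Fin N) (Fin N) ℂ} (hB : B.PosSemidef)
    {c : ℝ} (hc : 0 ≤ c) : ((c:ℂ) • B).PosSemidef := by
  refine PosSemidef.of_dotProduct_mulVec_nonneg ?_ ?_
  · show ((c:ℂ) • B)ᴴ = _
    rw [Matrix.conjTranspose_smul, hB.1.eq]
    congr 1
    simp [Complex.star_def, Complex.conj_ofReal]
  · intro x
    rw [Matrix.smul_mulVec, dotProduct_smul, smul_eq_mul]
    exact mul_nonneg (by exact_mod_cast Complex.zero_le_real.2 hc) (hB.dotProduct_mulVec_nonneg x)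

private lemma diag_entry_nonnegWF {B : Matrix (Fin N) (Fin N) ℂ} (hB : B.PosSemidef)
    (m : Fin N) : 0 ≤ (B m m).re := by
  have h := hB.dotProduct_mulVec_nonneg (Pi.single m 1)
  have he : star (Pi.single m 1 : Fin N → ℂ) ⬝ᵥ (B *ᵥ Pi.single m 1) = B m m := by
    simp [Matrix.mulVec_single, dotProduct, Pi.single_apply, apply_ite]
  rw [he] at h
  exact (Complex.le_def.mp h).1

end helpers

/-- Water-filling optimality: among Hermitian PSD matrices Q' commuting with Z and
    satisfying Tr(Q') ≤ τ, the matrix Q = U Diag(p) Uᴴ whose powers satisfy the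
    KKT water-filling conditions minimizes Σ_n w_n Tr[(Z⁻¹ + α_n Q)⁻¹]. -/
theorem water_filling_optimal {N M : ℕ}
    (U : Matrix (Fin N) (Fin N) ℂ) (hU : U ∈ Matrix.unitaryGroup (Fin N) ℂ)
    (σ : Fin N → ℝ) (hσ : ∀ m, 0 < σ m) (hord : Antitone σ)
    (Z : Matrix (Fin N) (Fin N) ℂ)
    (hZ : Z = U * Matrix.diagonal (fun m => (σ m : ℂ)) * Uᴴ)
    (α w : Fin M → ℝ) (hα : ∀ n, 0 < α n) (hw : ∀ n, 0 < w n)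
    (τ : ℝ) (hτ : 0 < τ)
    (p : Fin N → ℝ) (hp : ∀ m, 0 ≤ p m) (hpsum : ∑ m, p m = τ)
    (lam : ℝ)
    (hkkt1 : ∀ m, 0 < p m →
      ∑ n, w n * α n * σ m ^ 2 / (1 + α n * σ m * p m) ^ 2 = lam)
    (hkkt2 : ∀ m, p m = 0 → ∑ n, w n * α n * σ m ^ 2 ≤ lam) :
    ∀ Q' : Matrix (Fin N) (Fin N) ℂ, Q'.PosSemidef → Q' * Z = Z * Q' →
      Q'.trace.re ≤ τ →
      (∑ n, w n * ((Z⁻¹ + (α n : ℂ) •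
          (U * Matrix.diagonal (fun m => (p m : ℂ)) * Uᴴ))⁻¹).trace.re) ≤
        ∑ n, w n * ((Z⁻¹ + (α n : ℂ) • Q')⁻¹).trace.re := by
  intro Q' hQ' hcomm htrace
  have hU1 : U * Uᴴ = 1 := by
    rw [← Matrix.star_eq_conjTranspose]; exact hU.2
  have hU2 : Uᴴ * U = 1 := by
    rw [← Matrix.star_eq_conjTranspose]; exact hU.1
  have hDZ : (Matrix.diagonal fun m => ((σ m : ℝ):ℂ))⁻¹
      = Matrix.diagonal (fun m => (((σ m)⁻¹:ℝ):ℂ)) :=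
    Matrix.inv_eq_right_inv (diag_invWF σ hσ)
  have hZinv : Z⁻¹ = U * Matrix.diagonal (fun m => (((σ m)⁻¹:ℝ):ℂ)) * Uᴴ := by
    rw [hZ, conj_invWF hU1 hU2 (by rw [hDZ]; exact diag_invWF σ hσ), hDZ]
  -- the p-side trace values
  have hLn : ∀ n, ((Z⁻¹ + (α n:ℂ) • (U * Matrix.diagonal (fun m => (p m:ℂ)) * Uᴴ))⁻¹).trace.re
      = ∑ m, σ m / (1 + α n * σ m * p m) := by
    intro n
    have hEq : Z⁻¹ + (α n:ℂ) • (U * Matrix.diagonal (fun m => (p m:ℂ)) * Uᴴ)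
        = U * Matrix.diagonal (fun m => ((((σ m)⁻¹ + α n * p m :ℝ)):ℂ)) * Uᴴ := by
      rw [hZinv, ← Matrix.smul_mul, ← Matrix.mul_smul, ← Matrix.add_mul, ← Matrix.mul_add]
      congr 1
      congr 1
      rw [← Matrix.diagonal_smul, Matrix.diagonal_add]
      congr 1
      funext m
      simp only [Pi.smul_apply, smul_eq_mul]
      push_cast
      ring
    rw [hEq, conj_diag_inv_traceWF hU1 hU2 _ (fun m => by
      have := hσ m; have := hα n; have := hp m; positivity)]
    exact Finset.sum_congr rfl fun m _ => recipWF (σ m) (α n) (p m) (hσ m) (hα n) (hp m)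
  -- the Q'-side
  set B := Uᴴ * Q' * U with hBdef
  have hB : B.PosSemidef := hQ'.conjTranspose_mul_mul_same U
  have hQ'eq : U * B * Uᴴ = Q' := by
    rw [hBdef]
    simp only [Matrix.mul_assoc]
    rw [hU1, Matrix.mul_one, ← Matrix.mul_assoc, hU1, Matrix.one_mul]
  have hq : ∀ m, 0 ≤ (B m m).re := diag_entry_nonnegWF hB
  have hqsum : ∑ m, (B m m).re ≤ τ := by
    have h1 : B.trace = Q'.trace := by
      rw [hBdef, Matrix.trace_mul_cycle, hU1, Matrix.one_mul]
    have h2 : ∑ m, (B m m).re = B.trace.re := by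
      rw [Matrix.trace, Complex.re_sum]
      rfl
    rw [h2, h1]
    exact htrace
  have hRn : ∀ n, ∑ m, σ m / (1 + α n * σ m * (B m m).re) ≤
      ((Z⁻¹ + (α n:ℂ) • Q')⁻¹).trace.re := by
    intro n
    set A := Matrix.diagonal (fun m => (((σ m)⁻¹:ℝ):ℂ)) + (α n:ℂ) • B with hAdef
    have hApd : A.PosDef := by
      refine (Matrix.PosDef.diagonal fun m => ?_).add_posSemidef (smul_psdWF hB (hα n).le)
      exact Complex.zero_lt_real.2 (by have := hσ m; positivity)
    have hEq : Z⁻¹ + (α n:ℂ) • Q' = U * A * Uᴴ := by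
      rw [hZinv, hAdef, Matrix.mul_add, Matrix.add_mul, Matrix.mul_smul, Matrix.smul_mul,
        hQ'eq]
    rw [hEq, conj_invWF hU1 hU2
      (Matrix.mul_nonsing_inv A ((Matrix.isUnit_iff_isUnit_det A).mp hApd.isUnit)),
      conj_traceWF hU2]
    have htr : (A⁻¹).trace.re = ∑ m, (A⁻¹ m m).re := by
      rw [Matrix.trace, Complex.re_sum]
      rfl
    rw [htr]
    refine Finset.sum_le_sum fun m _ => ?_
    have h1 := inv_diag_entry hApd m
    have hAmm : (A m m).re = (σ m)⁻¹ + α n * (B m m).re := by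
      rw [hAdef]
      simp [Matrix.add_apply, Matrix.diagonal_apply_eq, Matrix.smul_apply, smul_eq_mul,
        Complex.add_re, Complex.mul_re, Complex.ofReal_re, Complex.ofReal_im]
    rw [hAmm] at h1
    calc σ m / (1 + α n * σ m * (B m m).re)
        = 1 / ((σ m)⁻¹ + α n * (B m m).re) := by
          rw [← recipWF (σ m) (α n) ((B m m).re) (hσ m) (hα n) (hq m), inv_eq_one_div]
      _ ≤ (A⁻¹ m m).re := h1
  -- assemble
  calc ∑ n, w n * ((Z⁻¹ + (α n:ℂ) •
          (U * Matrix.diagonal (fun m => (p m:ℂ)) * Uᴴ))⁻¹).trace.re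
      = ∑ n, w n * ∑ m, σ m / (1 + α n * σ m * p m) := by
        exact Finset.sum_congr rfl fun n _ => by rw [hLn n]
    _ = ∑ m, ∑ n, w n * (σ m / (1 + α n * σ m * p m)) := by
        rw [Finset.sum_comm]
        exact Finset.sum_congr rfl fun n _ => by rw [Finset.mul_sum]
    _ ≤ ∑ m, ∑ n, w n * (σ m / (1 + α n * σ m * (B m m).re)) :=
        scalarWF σ hσ α w hα hw τ hτ p hp hpsum lam hkkt1 hkkt2
          (fun m => (B m m).re) hq hqsum
    _ = ∑ n, w n * ∑ m, σ m / (1 + α n * σ m * (B m m).re) := by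
        rw [Finset.sum_comm]
        exact Finset.sum_congr rfl fun n _ => by rw [Finset.mul_sum]
    _ ≤ ∑ n, w n * ((Z⁻¹ + (α n:ℂ) • Q')⁻¹).trace.re :=
        Finset.sum_le_sum fun n _ => mul_le_mul_of_nonneg_left (hRn n) (hw n).le
end
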